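/- In a linear weighted congestion game (Ψ-game of degree 1), for every ρ ∈ [1, 11/10], if S is a ρ-approximate pure Nash equilibrium and S* minimizes the potential Φ, then Φ(S) ≤ ((3+√5)/2 + 6(ρ−1)) · Φ(S*). -/

import Mathlib

open Finset

open Finset

namespace Stmt19Aux

variable {α : Type*} [DecidableEq α]

lemma sym_succ_insert {a : α} {P : Finset α} (ha : a ∉ P) (k : ℕ) :
    (insert a P).sym (k+1) = P.sym (k+1) ∪ ((insert a P).sym k).image (Sym.cons a) := by
  ext m
  simp only [Finset.mem_union, Finset.mem_image, Finset.mem_sym_iff, Finset.mem_insert]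
  constructor
  · intro hm
    by_cases hma : a ∈ m
    · right
      refine ⟨m.erase a hma, fun b hb => hm b ?_, Sym.cons_erase hma⟩
      have : b ∈ (m.erase a hma : Multiset α) := hb
      rw [Sym.coe_erase] at this
      exact Multiset.mem_of_mem_erase this
    · left
      intro b hb
      rcases hm b hb with rfl | h
      · exact absurd hb hma
      · exact h
  · rintro (hm | ⟨m', hm', rfl⟩)
    · exact fun b hb => Or.inr (hm b hb)
    · intro b hb
      rcases Sym.mem_cons.mp hb with rfl | hb'
      · exact Or.inl rfl
      · exact hm' b hb'

noncomputable def symSum (w : α → ℝ) (k : ℕ) (P : Finset α) : ℝ :=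
  ∑ m ∈ P.sym k, ((m : Multiset α).map w).prod

lemma symSum_zero (w : α → ℝ) (P : Finset α) : symSum w 0 P = 1 := by
  simp only [symSum, Finset.sym_zero, Finset.sum_singleton]
  have : ((∅ : Sym α 0) : Multiset α) = 0 := rfl
  rw [this]
  simp

lemma symSum_insert (w : α → ℝ) {a : α} {P : Finset α} (ha : a ∉ P) (k : ℕ) :
    symSum w (k+1) (insert a P) = symSum w (k+1) P + w a * symSum w k (insert a P) := by
  have hdisj : Disjoint (P.sym (k+1)) (((insert a P).sym k).image (Sym.cons a)) := by
    rw [Finset.disjoint_left]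
    rintro m hm hm'
    rcases Finset.mem_image.mp hm' with ⟨m', _, rfl⟩
    exact ha (Finset.mem_sym_iff.mp hm a (Sym.mem_cons_self a m'))
  simp only [symSum]
  rw [sym_succ_insert ha, Finset.sum_union hdisj,
    Finset.sum_image (fun x _ y _ h => (Sym.cons_inj_right a x y).mp h), Finset.mul_sum]
  congr 1
  refine Finset.sum_congr rfl fun m _ => ?_
  rw [Sym.coe_cons, Multiset.map_cons, Multiset.prod_cons]

lemma symSum_one (w : α → ℝ) (P : Finset α) : symSum w 1 P = ∑ u ∈ P, w u := by
  induction P using Finset.induction_on with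
  | empty => simp [symSum]
  | insert a P ha ih =>
    rw [show (1:ℕ) = 0+1 from rfl, symSum_insert w ha 0, symSum_zero, ih, Finset.sum_insert ha]
    ring

lemma symSum_two (w : α → ℝ) (P : Finset α) :
    2 * symSum w 2 P = (∑ u ∈ P, w u)^2 + ∑ u ∈ P, (w u)^2 := by
  induction P using Finset.induction_on with
  | empty => simp [symSum]
  | insert a P ha ih =>
    rw [show (2:ℕ) = 1+1 from rfl, symSum_insert w ha 1, symSum_one,
      Finset.sum_insert ha, Finset.sum_insert ha]
    linear_combination ih

end Stmt19Aux


variable {n : ℕ} {E : Type*} [Fintype E] [DecidableEq E]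

/-- `PsiW w k P = k! ·` (sum of all monomials of total degree `k` in the
weights of the players in `P`). -/
noncomputable def PsiW (w : Fin n → ℝ) (k : ℕ) (P : Finset (Fin n)) : ℝ :=
  (Nat.factorial k : ℝ) * ∑ m ∈ P.sym k, ((m : Multiset (Fin n)).map w).prod

/-- A weighted congestion game with `n` players, resources `E`, and polynomial
latency functions of maximum degree `d` with non-negative coefficients
`a e k` (for `k ≤ d`). The same data also describes the corresponding Ψ-game. -/
structure WCGame (n : ℕ) (E : Type*) [Fintype E] (d : ℕ) where
  /-- weights of the players -/
  w : Fin n → ℝ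
  w_pos : ∀ u, 0 < w u
  /-- strategy sets: nonempty collections of nonempty sets of resources -/
  strat : Fin n → Finset (Finset E)
  strat_ne : ∀ u, (strat u).Nonempty
  strat_mem_ne : ∀ u, ∀ s ∈ strat u, s.Nonempty
  /-- coefficients of the latency functions -/
  a : E → ℕ → ℝ
  a_nonneg : ∀ e k, 0 ≤ a e k

namespace WCGame

variable {d : ℕ} (G : WCGame n E d)

/-- A state assigns a strategy to every player. -/
def IsState (S : Fin n → Finset E) : Prop := ∀ u, S u ∈ G.strat u

/-- The set of players using resource `e` in state `S`. -/
def users (S : Fin n → Finset E) (e : E) : Finset (Fin n) :=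
  univ.filter fun u => e ∈ S u

/-- The cost of player `u` in the weighted congestion game. -/
noncomputable def cost (S : Fin n → Finset E) (u : Fin n) : ℝ :=
  G.w u * ∑ e ∈ S u, ∑ k ∈ Finset.range (d + 1),
    G.a e k * ((users S e).sum G.w) ^ k

/-- The cost of player `u` in the corresponding Ψ-game. -/
noncomputable def pcost (S : Fin n → Finset E) (u : Fin n) : ℝ :=
  G.w u * ∑ e ∈ S u, ∑ k ∈ Finset.range (d + 1),
    G.a e k * PsiW G.w k (users S e)

/-- The potential of the subgame induced by the players in `C`. -/
noncomputable def potOn (C : Finset (Fin n)) (S : Fin n → Finset E) : ℝ :=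
  ∑ e : E, ∑ k ∈ Finset.range (d + 1),
    G.a e k / (k + 1) * PsiW G.w (k + 1) (users S e ∩ C)

/-- The potential function of the Ψ-game. -/
noncomputable def pot (S : Fin n → Finset E) : ℝ := G.potOn univ S

end WCGame

-- PsiW and game lemmas (to be appended after defs)
section PsiWLemmas
open Stmt19Aux

variable {n : ℕ}

lemma psiW_zero (w : Fin n → ℝ) (P : Finset (Fin n)) : PsiW w 0 P = 1 := by
  have := symSum_zero w P
  simp only [PsiW, Nat.factorial_zero, Nat.cast_one, one_mul]
  simpa [symSum] using this

lemma psiW_one (w : Fin n → ℝ) (P : Finset (Fin n)) : PsiW w 1 P = ∑ u ∈ P, w u := by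
  have := symSum_one w P
  simp only [PsiW, Nat.factorial_one, Nat.cast_one, one_mul]
  simpa [symSum] using this

lemma psiW_two (w : Fin n → ℝ) (P : Finset (Fin n)) :
    PsiW w 2 P = (∑ u ∈ P, w u)^2 + ∑ u ∈ P, (w u)^2 := by
  have := symSum_two w P
  simp only [PsiW, Nat.factorial_two, Nat.cast_ofNat]
  rw [← this]
  simp [symSum]

end PsiWLemmas

section GameLemmas
open Finset

variable {n : ℕ} {E : Type*} [Fintype E] [DecidableEq E] (G : WCGame n E 1)

lemma pot_eq (S : Fin n → Finset E) :
    G.pot S = ∑ e : E, (G.a e 0 * (∑ u ∈ WCGame.users S e, G.w u)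
      + G.a e 1 / 2 * ((∑ u ∈ WCGame.users S e, G.w u)^2 + ∑ u ∈ WCGame.users S e, (G.w u)^2)) := by
  unfold WCGame.pot WCGame.potOn
  refine Finset.sum_congr rfl fun e _ => ?_
  rw [Finset.sum_range_succ, Finset.sum_range_one, Finset.inter_univ]
  norm_num [psiW_one, psiW_two]

lemma cost_eq (S : Fin n → Finset E) (u : Fin n) :
    G.cost S u = G.w u * ∑ e ∈ S u, (G.a e 0 + G.a e 1 * ∑ v ∈ WCGame.users S e, G.w v) := by
  unfold WCGame.cost
  congr 1
  refine Finset.sum_congr rfl fun e _ => ?_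
  rw [Finset.sum_range_succ, Finset.sum_range_one]
  norm_num

lemma sum_swap_users' (T : Fin n → Finset E) (f : Fin n → E → ℝ) :
    ∑ u, ∑ e ∈ T u, f u e = ∑ e : E, ∑ u ∈ WCGame.users T e, f u e := by
  calc ∑ u, ∑ e ∈ T u, f u e
      = ∑ u, ∑ e : E, if e ∈ T u then f u e else 0 := by
        refine Finset.sum_congr rfl fun u _ => ?_
        rw [Finset.sum_ite_mem, Finset.univ_inter]
    _ = ∑ e : E, ∑ u, if e ∈ T u then f u e else 0 := Finset.sum_comm
    _ = ∑ e : E, ∑ u ∈ WCGame.users T e, f u e := by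
        refine Finset.sum_congr rfl fun e _ => ?_
        rw [WCGame.users, Finset.sum_filter]

lemma sum_cost_eq (S : Fin n → Finset E) :
    ∑ u, G.cost S u = ∑ e : E, ((∑ u ∈ WCGame.users S e, G.w u) * (G.a e 0
      + G.a e 1 * ∑ v ∈ WCGame.users S e, G.w v)) := by
  calc ∑ u, G.cost S u
      = ∑ u, ∑ e ∈ S u, G.w u * (G.a e 0 + G.a e 1 * ∑ v ∈ WCGame.users S e, G.w v) := by
        refine Finset.sum_congr rfl fun u _ => ?_
        rw [cost_eq, Finset.mul_sum]
    _ = ∑ e : E, ∑ u ∈ WCGame.users S e, G.w u * (G.a e 0 + G.a e 1 * ∑ v ∈ WCGame.users S e, G.w v) :=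
        sum_swap_users' S _
    _ = _ := by
        refine Finset.sum_congr rfl fun e _ => ?_
        rw [Finset.sum_mul]

end GameLemmas

set_option maxHeartbeats 1600000

theorem stmt19 {n : ℕ} {E : Type*} [Fintype E] [DecidableEq E]
    (G : WCGame n E 1) (ρ : ℝ) (hρ : ρ ∈ Set.Icc (1 : ℝ) (11 / 10))
    (S : Fin n → Finset E) (hS : G.IsState S)
    (heq : ∀ u : Fin n, ∀ s' ∈ G.strat u,
      G.cost S u ≤ ρ * G.cost (Function.update S u s') u)
    (Sstar : Fin n → Finset E) (hSstar : G.IsState Sstar)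
    (hmin : ∀ S' : Fin n → Finset E, G.IsState S' → G.pot Sstar ≤ G.pot S') :
    G.pot S ≤ ((3 + Real.sqrt 5) / 2 + 6 * (ρ - 1)) * G.pot Sstar := by
  obtain ⟨hρ1, hρ2⟩ := hρ
  have hw : ∀ u, 0 ≤ G.w u := fun u => (G.w_pos u).le
  set s : ℝ := Real.sqrt 5 with hsdef
  have hs5 : s ^ 2 = 5 := Real.sq_sqrt (by norm_num)
  have hs0 : 0 ≤ s := Real.sqrt_nonneg 5
  have hs2 : 2 ≤ s := by nlinarith
  have hs3 : s ≤ 9 / 4 := by nlinarith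
  have hA : ∀ e : E, 0 ≤ G.a e 1 := fun e => G.a_nonneg e 1
  have hB : ∀ e : E, 0 ≤ G.a e 0 := fun e => G.a_nonneg e 0
  have hl : ∀ (T : Fin n → Finset E) (e : E), 0 ≤ ∑ u ∈ WCGame.users T e, G.w u :=
    fun T e => Finset.sum_nonneg fun u _ => hw u
  have hq : ∀ (T : Fin n → Finset E) (e : E), 0 ≤ ∑ u ∈ WCGame.users T e, (G.w u) ^ 2 :=
    fun T e => Finset.sum_nonneg fun u _ => sq_nonneg _
  have hql : ∀ (T : Fin n → Finset E) (e : E),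
      ∑ u ∈ WCGame.users T e, (G.w u) ^ 2 ≤ (∑ u ∈ WCGame.users T e, G.w u) ^ 2 := by
    intro T e
    calc ∑ u ∈ WCGame.users T e, (G.w u) ^ 2
        ≤ ∑ u ∈ WCGame.users T e, G.w u * ∑ v ∈ WCGame.users T e, G.w v := by
          refine Finset.sum_le_sum fun u hu => ?_
          rw [sq]
          exact mul_le_mul_of_nonneg_left (Finset.single_le_sum (fun v _ => hw v) hu) (hw u)
      _ = (∑ u ∈ WCGame.users T e, G.w u) ^ 2 := by rw [← Finset.sum_mul, sq]
  -- deviation bound per player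
  have hdev : ∀ u : Fin n, G.cost (Function.update S u (Sstar u)) u
      ≤ G.w u * ∑ e ∈ Sstar u,
        (G.a e 0 + G.a e 1 * ((∑ v ∈ WCGame.users S e, G.w v) + G.w u)) := by
    intro u
    rw [cost_eq]
    simp only [Function.update_self]
    refine mul_le_mul_of_nonneg_left (Finset.sum_le_sum fun e _ => ?_) (hw u)
    have hsub : WCGame.users (Function.update S u (Sstar u)) e ⊆
        insert u (WCGame.users S e) := by
      intro v hv
      rw [WCGame.users, Finset.mem_filter] at hv
      rcases eq_or_ne v u with rfl | hne
      · exact Finset.mem_insert_self _ _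
      · rw [Function.update_of_ne hne] at hv
        exact Finset.mem_insert_of_mem (Finset.mem_filter.mpr ⟨Finset.mem_univ v, hv.2⟩)
    have hL : ∑ v ∈ WCGame.users (Function.update S u (Sstar u)) e, G.w v
        ≤ (∑ v ∈ WCGame.users S e, G.w v) + G.w u := by
      calc ∑ v ∈ WCGame.users (Function.update S u (Sstar u)) e, G.w v
          ≤ ∑ v ∈ insert u (WCGame.users S e), G.w v :=
            Finset.sum_le_sum_of_subset_of_nonneg hsub (fun v _ _ => hw v)
        _ ≤ (∑ v ∈ WCGame.users S e, G.w v) + G.w u := by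
            by_cases hu : u ∈ WCGame.users S e
            · rw [Finset.insert_eq_self.mpr hu]
              linarith [hw u]
            · rw [Finset.sum_insert hu]
              linarith
    exact add_le_add_right (mul_le_mul_of_nonneg_left hL (hA e)) _
  -- total cost bound
  obtain ⟨C, hCdef⟩ : ∃ C : ℝ, C = ∑ u, G.cost S u := ⟨_, rfl⟩
  obtain ⟨D, hDdef⟩ : ∃ D : ℝ, D = ∑ e : E,
      (G.a e 0 * (∑ u ∈ WCGame.users Sstar e, G.w u)
        + G.a e 1 * (∑ v ∈ WCGame.users S e, G.w v) * (∑ u ∈ WCGame.users Sstar e, G.w u)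
        + G.a e 1 * ∑ u ∈ WCGame.users Sstar e, (G.w u) ^ 2) := ⟨_, rfl⟩
  obtain ⟨P, hPdef⟩ : ∃ P : ℝ, P = G.pot Sstar := ⟨_, rfl⟩
  have hCeq : C = ∑ e : E, (G.a e 0 * (∑ u ∈ WCGame.users S e, G.w u)
      + G.a e 1 * (∑ u ∈ WCGame.users S e, G.w u) ^ 2) := by
    rw [hCdef, sum_cost_eq]
    refine Finset.sum_congr rfl fun e _ => ?_
    ring
  have hC0 : 0 ≤ C := by
    rw [hCeq]
    refine Finset.sum_nonneg fun e _ => ?_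
    have := hl S e
    have := hA e
    have := hB e
    positivity
  have hCle : C ≤ ρ * D := by
    rw [hCdef, hDdef]
    have step1 : ∑ u, G.cost S u ≤ ρ * ∑ u, (G.w u * ∑ e ∈ Sstar u,
        (G.a e 0 + G.a e 1 * ((∑ v ∈ WCGame.users S e, G.w v) + G.w u))) := by
      rw [Finset.mul_sum]
      refine Finset.sum_le_sum fun u _ => ?_
      calc G.cost S u ≤ ρ * G.cost (Function.update S u (Sstar u)) u :=
            heq u (Sstar u) (hSstar u)
        _ ≤ ρ * (G.w u * ∑ e ∈ Sstar u,
            (G.a e 0 + G.a e 1 * ((∑ v ∈ WCGame.users S e, G.w v) + G.w u))) :=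
            mul_le_mul_of_nonneg_left (hdev u) (by linarith)
    refine step1.trans (mul_le_mul_of_nonneg_left (le_of_eq ?_) (by linarith : (0:ℝ) ≤ ρ))
    calc ∑ u, (G.w u * ∑ e ∈ Sstar u,
          (G.a e 0 + G.a e 1 * ((∑ v ∈ WCGame.users S e, G.w v) + G.w u)))
        = ∑ u, ∑ e ∈ Sstar u, G.w u *
            (G.a e 0 + G.a e 1 * ((∑ v ∈ WCGame.users S e, G.w v) + G.w u)) := by
          refine Finset.sum_congr rfl fun u _ => Finset.mul_sum _ _ _
      _ = ∑ e : E, ∑ u ∈ WCGame.users Sstar e, G.w u *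
            (G.a e 0 + G.a e 1 * ((∑ v ∈ WCGame.users S e, G.w v) + G.w u)) :=
          sum_swap_users' Sstar _
      _ = _ := by
          refine Finset.sum_congr rfl fun e _ => ?_
          have expand : ∀ u : Fin n, G.w u *
              (G.a e 0 + G.a e 1 * ((∑ v ∈ WCGame.users S e, G.w v) + G.w u))
              = (G.a e 0 + G.a e 1 * (∑ v ∈ WCGame.users S e, G.w v)) * G.w u
                + G.a e 1 * (G.w u) ^ 2 := fun u => by ring
          simp_rw [expand]
          rw [Finset.sum_add_distrib, ← Finset.mul_sum, ← Finset.mul_sum]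
          ring
  -- per-resource smoothness bound, summed
  have hD2 : (1 + s) * D ≤ C + (5 + 3 * s) / 2 * P := by
    rw [hDdef, hPdef, hCeq, pot_eq, Finset.mul_sum, Finset.mul_sum, ← Finset.sum_add_distrib]
    refine Finset.sum_le_sum fun e _ => ?_
    set B := G.a e 0
    set A := G.a e 1
    set l := ∑ u ∈ WCGame.users S e, G.w u
    set l' := ∑ u ∈ WCGame.users Sstar e, G.w u
    set q' := ∑ u ∈ WCGame.users Sstar e, (G.w u) ^ 2
    have h1 : 0 ≤ A := hA e
    have h2 : 0 ≤ B := hB e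
    have h3 : 0 ≤ l := hl S e
    have h4 : 0 ≤ l' := hl Sstar e
    have h5 : 0 ≤ q' := hq Sstar e
    have h6 : q' ≤ l' ^ 2 := hql Sstar e
    have e1 : A * (2*l - (1+s)*l')^2
        = 4*(A*l^2) - 4*((1+s)*(A*(l*l'))) + (6+2*s)*(A*l'^2) := by
      linear_combination (A*l'^2) * hs5
    have e2 : 4*((1+s)*(A*(l*l'))) ≤ 4*(A*l^2) + (6+2*s)*(A*l'^2) := by
      nlinarith [mul_nonneg h1 (sq_nonneg (2*l - (1+s)*l')), e1]
    nlinarith [e2,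
      mul_nonneg (mul_nonneg h1 (sub_nonneg.mpr h6)) (by linarith : (0:ℝ) ≤ s - 1),
      mul_nonneg h2 h4, mul_nonneg h2 h3, mul_nonneg hs0 (mul_nonneg h2 h4)]
  have hP0 : 0 ≤ P := by
    rw [hPdef, pot_eq]
    refine Finset.sum_nonneg fun e _ => ?_
    have h4 := hl Sstar e
    have h5 := hq Sstar e
    have h1 := hA e
    have h2 := hB e
    positivity
  have hPS : G.pot S ≤ C := by
    rw [pot_eq, hCeq]
    refine Finset.sum_le_sum fun e _ => ?_
    have h6 := hql S e
    have h1 := hA e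
    nlinarith [hq S e]
  -- combine
  rw [← hPdef]
  clear hCeq hCdef hDdef hPdef hdev heq hmin hS hSstar
  have h1 : (1 + s) * C ≤ (1 + s) * (ρ * D) :=
    mul_le_mul_of_nonneg_left hCle (by linarith)
  have h2 : ρ * ((1 + s) * D) ≤ ρ * (C + (5 + 3 * s) / 2 * P) :=
    mul_le_mul_of_nonneg_left hD2 (by linarith)
  have h1' : C + s * C ≤ ρ * D + s * (ρ * D) := by linarith [h1]
  have hkey : (1 + s - ρ) * C ≤ ρ * ((5 + 3 * s) / 2) * P := by nlinarith [h1, h2]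
  have hscalar : ρ * ((5 + 3 * s) / 2) ≤ ((3 + s) / 2 + 6 * (ρ - 1)) * (1 + s - ρ) := by
    nlinarith [mul_nonneg (by linarith : (0:ℝ) ≤ ρ - 1)
      (by linarith : (0:ℝ) ≤ 4 * s - 4 - 6 * (ρ - 1))]
  have hpos : (0:ℝ) < 1 + s - ρ := by linarith
  have h3 : (1 + s - ρ) * C ≤ (1 + s - ρ) * (((3 + s) / 2 + 6 * (ρ - 1)) * P) := by
    calc (1 + s - ρ) * C ≤ ρ * ((5 + 3 * s) / 2) * P := hkey
      _ ≤ ((3 + s) / 2 + 6 * (ρ - 1)) * (1 + s - ρ) * P :=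
          mul_le_mul_of_nonneg_right hscalar hP0
      _ = (1 + s - ρ) * (((3 + s) / 2 + 6 * (ρ - 1)) * P) := by ring
  have hfinal : C ≤ ((3 + s) / 2 + 6 * (ρ - 1)) * P := le_of_mul_le_mul_left h3 hpos
  linarith
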